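/- Suppose 𝒢 has exactly two zealots, with fixed opinions −1 and +1, every persuadable node is adjacent to both zealots, and the subgraph induced on the persuadable nodes 𝒫 is d-regular. Let L_𝒫 be the combinatorial Laplacian of the persuadable subgraph, and write u = ω(0) and v = ω(1) (both depending on γ). Then: (1) if δ > 1, there exists Γ such that for all γ > Γ the harmonic state x̄ is linearly stable; (2) if δ = 1, then for every eigenvalue λ of L_𝒫 there exists Γ such that for all γ > Γ one has λ ≤ −2v(1 − 2γ(1 − v))/u; and (3) if 0 ≤ δ < 1, there exists Γ such that for all γ > Γ the only eigenvalue of L_𝒫 satisfying λ ≤ −2v(1 − 2γ(1 − v))/u is λ = 0. -/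

import Mathlib

open Finset Filter

namespace SBCM

variable {V : Type*} [Fintype V] [DecidableEq V]

/-- Sigmoidal influence weight. -/
noncomputable def wt (G : SimpleGraph V) [DecidableRel G.Adj] (γ δ : ℝ) (x : V → ℝ)
    (i j : V) : ℝ :=
  if G.Adj i j then 1 / (1 + Real.exp (γ * (x i - x j) ^ 2 - γ * δ)) else 0

/-- SBCM update operator. -/
noncomputable def F (G : SimpleGraph V) [DecidableRel G.Adj] (Z : Finset V) (γ δ : ℝ)
    (x : V → ℝ) (i : V) : ℝ :=
  if i ∈ Z then 0
  else (∑ j, wt G γ δ x i j * (x j - x i)) / (∑ j, wt G γ δ x i j)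

/-- Jacobian block over the persuadable nodes. -/
noncomputable def Jp (G : SimpleGraph V) [DecidableRel G.Adj] (Z : Finset V) (γ δ : ℝ)
    (x : V → ℝ) : Matrix {v : V // v ∉ Z} {v : V // v ∉ Z} ℝ :=
  fun i j => fderiv ℝ (fun y : V → ℝ => F G Z γ δ y i.val) x (Pi.single (j : V) (1 : ℝ))

/-- `μ` is a (real) eigenvalue of the matrix `M`. -/
def HasEig {n : Type*} [Fintype n] (M : Matrix n n ℝ) (μ : ℝ) : Prop :=
  ∃ φ : n → ℝ, φ ≠ 0 ∧ M.mulVec φ = μ • φ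

/-- All eigenvalues of `M` are strictly negative. -/
def LinStable {n : Type*} [Fintype n] (M : Matrix n n ℝ) : Prop :=
  ∀ μ : ℝ, HasEig M μ → μ < 0

/-- `M` has a strictly positive eigenvalue. -/
def LinUnstable {n : Type*} [Fintype n] (M : Matrix n n ℝ) : Prop :=
  ∃ μ : ℝ, 0 < μ ∧ HasEig M μ

end SBCM

namespace SBCM

/-- The harmonic state of a balanced-exposure graph: zealot `z₁` holds opinion `−1`,
zealot `z₂` holds opinion `+1`, and all persuadable nodes hold opinion `0`. -/
noncomputable def xbarBE {V : Type*} [DecidableEq V] (z₁ z₂ : V) : V → ℝ :=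
  fun v => if v = z₁ then -1 else if v = z₂ then 1 else 0

end SBCM

namespace SBCM

/-- The combinatorial Laplacian of the subgraph induced on the persuadable nodes. -/
noncomputable def Lp {V : Type*} [Fintype V] [DecidableEq V] (G : SimpleGraph V)
    [DecidableRel G.Adj] (Z : Finset V) :
    Matrix {v : V // v ∉ Z} {v : V // v ∉ Z} ℝ :=
  fun i j =>
    (if i = j then
        ((Finset.univ.filter fun k : {v : V // v ∉ Z} => G.Adj i.1 k.1).card : ℝ)
      else 0)
    - (if G.Adj i.1 j.1 then 1 else 0)

end SBCM


namespace SBCM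

set_option linter.unusedSectionVars false

variable {V : Type*} [Fintype V] [DecidableEq V]

lemma hasFDerivAt_wt (G : SimpleGraph V) [DecidableRel G.Adj] (γ δ : ℝ) (x : V → ℝ)
    (i k : V) :
    HasFDerivAt (fun y : V → ℝ => wt G γ δ y i k)
      ((-(2*γ) * (x i - x k) * wt G γ δ x i k * (1 - wt G γ δ x i k)) •
        ((ContinuousLinearMap.proj i : (V → ℝ) →L[ℝ] ℝ) - ContinuousLinearMap.proj k)) x := by
  by_cases h : G.Adj i k
  · have h0 : HasFDerivAt (fun y : V → ℝ => y i - y k)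
        ((ContinuousLinearMap.proj i : (V → ℝ) →L[ℝ] ℝ) - ContinuousLinearMap.proj k) x :=
      ((ContinuousLinearMap.proj i : (V → ℝ) →L[ℝ] ℝ).hasFDerivAt).sub
        ((ContinuousLinearMap.proj k : (V → ℝ) →L[ℝ] ℝ).hasFDerivAt)
    have h1 := ((h0.mul h0).const_mul γ).sub_const (γ * δ)
    have h2 := h1.exp
    have h3 := h2.const_add 1
    have hE : (0:ℝ) < 1 + Real.exp (γ * ((x i - x k) * (x i - x k)) - γ * δ) := by positivity
    have h4 := (hasDerivAt_inv hE.ne').comp_hasFDerivAt x h3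
    have hfun : (fun y : V → ℝ => wt G γ δ y i k)
        = (fun y : V → ℝ => ((fun t => t⁻¹) ∘ fun y : V → ℝ =>
            1 + Real.exp (γ * ((y i - y k) * (y i - y k)) - γ * δ)) y) := by
      funext y
      simp [wt, if_pos h, one_div, pow_two, Function.comp]
    rw [hfun]
    refine h4.congr_fderiv ?_
    ext y
    have hE2 : (0:ℝ) < 1 + Real.exp (γ * (x i - x k) ^ 2 - γ * δ) := by positivity
    simp only [wt, if_pos h, ContinuousLinearMap.smul_apply, ContinuousLinearMap.sub_apply,
      ContinuousLinearMap.proj_apply, ContinuousLinearMap.add_apply, ContinuousLinearMap.coe_smul',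
      Pi.smul_apply, smul_eq_mul, pow_two, Pi.mul_apply]
    field_simp
    ring
  · have hfun : (fun y : V → ℝ => wt G γ δ y i k) = fun _ => (0:ℝ) := by
      funext y; simp [wt, if_neg h]
    rw [hfun]
    have : wt G γ δ x i k = 0 := by simp [wt, if_neg h]
    rw [this]
    simpa using hasFDerivAt_const (0:ℝ) x

/-- The Jacobian entry at a state where the numerator vanishes. -/
lemma jp_eq (G : SimpleGraph V) [DecidableRel G.Adj] (Z : Finset V) (γ δ : ℝ) (x : V → ℝ)
    (i j : {v : V // v ∉ Z})
    (hS : (∑ k, wt G γ δ x i.1 k) ≠ 0)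
    (hN : (∑ k, wt G γ δ x i.1 k * (x k - x i.1)) = 0) :
    Jp G Z γ δ x i j =
      (∑ k, ((x k - x i.1) * (-(2*γ) * (x i.1 - x k) * wt G γ δ x i.1 k *
          (1 - wt G γ δ x i.1 k)) *
            ((Pi.single (j:V) (1:ℝ) : V → ℝ) i.1 - (Pi.single (j:V) (1:ℝ) : V → ℝ) k)
        + wt G γ δ x i.1 k * ((Pi.single (j:V) (1:ℝ) : V → ℝ) k - (Pi.single (j:V) (1:ℝ) : V → ℝ) i.1)))
      / (∑ k, wt G γ δ x i.1 k) := by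
  have hF : (fun y : V → ℝ => F G Z γ δ y i.1)
      = fun y : V → ℝ => (∑ k, wt G γ δ y i.1 k * (y k - y i.1)) *
          (∑ k, wt G γ δ y i.1 k)⁻¹ := by
    funext y; simp [F, if_neg i.2, div_eq_mul_inv]
  set Dw : V → (V → ℝ) →L[ℝ] ℝ := fun k =>
    (-(2*γ) * (x i.1 - x k) * wt G γ δ x i.1 k * (1 - wt G γ δ x i.1 k)) •
      ((ContinuousLinearMap.proj i.1 : (V → ℝ) →L[ℝ] ℝ) - ContinuousLinearMap.proj k)
    with hDw
  have hterm : ∀ k : V, HasFDerivAt (fun y : V → ℝ => wt G γ δ y i.1 k * (y k - y i.1))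
      (wt G γ δ x i.1 k • ((ContinuousLinearMap.proj k : (V → ℝ) →L[ℝ] ℝ)
          - ContinuousLinearMap.proj i.1) + (x k - x i.1) • Dw k) x := by
    intro k
    have hlin : HasFDerivAt (fun y : V → ℝ => y k - y i.1)
        ((ContinuousLinearMap.proj k : (V → ℝ) →L[ℝ] ℝ) - ContinuousLinearMap.proj i.1) x :=
      ((ContinuousLinearMap.proj k : (V → ℝ) →L[ℝ] ℝ).hasFDerivAt).sub
        ((ContinuousLinearMap.proj i.1 : (V → ℝ) →L[ℝ] ℝ).hasFDerivAt)
    exact (hasFDerivAt_wt G γ δ x i.1 k).mul hlin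
  have hNder : HasFDerivAt (fun y : V → ℝ => ∑ k, wt G γ δ y i.1 k * (y k - y i.1))
      (∑ k, (wt G γ δ x i.1 k • ((ContinuousLinearMap.proj k : (V → ℝ) →L[ℝ] ℝ)
          - ContinuousLinearMap.proj i.1) + (x k - x i.1) • Dw k)) x :=
    HasFDerivAt.fun_sum (fun k _ => hterm k)
  have hSder : HasFDerivAt (fun y : V → ℝ => ∑ k, wt G γ δ y i.1 k)
      (∑ k, Dw k) x := HasFDerivAt.fun_sum (fun k _ => hasFDerivAt_wt G γ δ x i.1 k)
  have hinv : HasFDerivAt (fun y : V → ℝ => (∑ k, wt G γ δ y i.1 k)⁻¹)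
      ((-(((∑ k, wt G γ δ x i.1 k)) ^ 2)⁻¹) • (∑ k, Dw k)) x :=
    (hasDerivAt_inv hS).comp_hasFDerivAt x hSder
  have hFder := hNder.mul hinv
  have hfd : fderiv ℝ (fun y : V → ℝ => F G Z γ δ y i.1) x
      = ((∑ k, wt G γ δ x i.1 k * (x k - x i.1)) •
          ((-(((∑ k, wt G γ δ x i.1 k)) ^ 2)⁻¹) • (∑ k, Dw k))
        + (∑ k, wt G γ δ x i.1 k)⁻¹ •
          (∑ k, (wt G γ δ x i.1 k • ((ContinuousLinearMap.proj k : (V → ℝ) →L[ℝ] ℝ)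
            - ContinuousLinearMap.proj i.1) + (x k - x i.1) • Dw k))) := by
    rw [hF]
    exact hFder.fderiv
  show fderiv ℝ (fun y : V → ℝ => F G Z γ δ y i.1) x (Pi.single (j:V) (1:ℝ)) = _
  rw [hfd, hN]
  simp only [zero_smul, zero_add, ContinuousLinearMap.smul_apply,
    ContinuousLinearMap.sum_apply, ContinuousLinearMap.add_apply,
    ContinuousLinearMap.sub_apply, ContinuousLinearMap.proj_apply, hDw,
    smul_eq_mul, div_eq_inv_mul]
  congr 1
  apply Finset.sum_congr rfl
  intro k _
  ring

lemma jp_entry (G : SimpleGraph V) [DecidableRel G.Adj] (z₁ z₂ : V) (hzz : z₁ ≠ z₂)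
    (hadj : ∀ i : V, i ∉ ({z₁, z₂} : Finset V) → G.Adj i z₁ ∧ G.Adj i z₂)
    (d : ℕ)
    (hreg : ∀ i : {v : V // v ∉ ({z₁, z₂} : Finset V)},
      (Finset.univ.filter fun k : {v : V // v ∉ ({z₁, z₂} : Finset V)} =>
        G.Adj i.1 k.1).card = d)
    (γ δ : ℝ) (i j : {v : V // v ∉ ({z₁, z₂} : Finset V)}) :
    Jp G ({z₁, z₂} : Finset V) γ δ (xbarBE z₁ z₂) i j =
      ((if i = j then 4*γ*(1 / (1 + Real.exp (γ - γ*δ)))*(1 - (1 / (1 + Real.exp (γ - γ*δ))))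
          - (2*(1 / (1 + Real.exp (γ - γ*δ))) + d*(1 / (1 + Real.exp (-(γ*δ))))) else 0)
        + (if G.Adj i.1 j.1 then (1 / (1 + Real.exp (-(γ*δ)))) else 0))
      / (2*(1 / (1 + Real.exp (γ - γ*δ))) + d*(1 / (1 + Real.exp (-(γ*δ))))) := by
  set u : ℝ := 1 / (1 + Real.exp (-(γ*δ))) with hu
  set v : ℝ := 1 / (1 + Real.exp (γ - γ*δ)) with hv
  set x : V → ℝ := xbarBE z₁ z₂ with hxdef
  have hne : ∀ w : V, w ∉ ({z₁, z₂} : Finset V) → w ≠ z₁ ∧ w ≠ z₂ := by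
    intro w hw
    constructor <;> rintro rfl <;> simp at hw
  have hx0 : ∀ w : V, w ∉ ({z₁, z₂} : Finset V) → x w = 0 := by
    intro w hw
    obtain ⟨h1, h2⟩ := hne w hw
    simp [hxdef, xbarBE, h1, h2]
  have hxz1 : x z₁ = -1 := by simp [hxdef, xbarBE]
  have hxz2 : x z₂ = 1 := by simp [hxdef, xbarBE, hzz.symm]
  have hxi : x i.1 = 0 := hx0 i.1 i.2
  have hwP : ∀ k : V, k ∉ ({z₁, z₂} : Finset V) →
      wt G γ δ x i.1 k = if G.Adj i.1 k then u else 0 := by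
    intro k hk
    by_cases h : G.Adj i.1 k
    · simp only [wt, if_pos h, hxi, hx0 k hk]
      norm_num
      rw [hu, one_div]
    · simp [wt, if_neg h]
  have hwz1 : wt G γ δ x i.1 z₁ = v := by
    have h := (hadj i.1 i.2).1
    simp only [wt, if_pos h, hxi, hxz1]
    norm_num
    rw [hv, one_div]
  have hwz2 : wt G γ δ x i.1 z₂ = v := by
    have h := (hadj i.1 i.2).2
    simp only [wt, if_pos h, hxi, hxz2]
    norm_num
    rw [hv, one_div]
  have hu0 : 0 < u := by rw [hu]; positivity
  have hv0 : 0 < v := by rw [hv]; positivity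
  have split : ∀ f : V → ℝ, (∑ k, f k)
      = (∑ k ∈ Finset.univ \ ({z₁, z₂} : Finset V), f k) + (f z₁ + f z₂) := by
    intro f
    rw [← Finset.sum_pair hzz]
    exact (Finset.sum_sdiff (Finset.subset_univ _)).symm
  have subt : ∀ f : V → ℝ, (∑ k ∈ Finset.univ \ ({z₁, z₂} : Finset V), f k)
      = ∑ k : {v : V // v ∉ ({z₁, z₂} : Finset V)}, f k.1 := by
    intro f
    exact Finset.sum_subtype _ (by simp) f
  have hsum : (∑ k, wt G γ δ x i.1 k) = 2*v + d*u := by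
    rw [split, hwz1, hwz2]
    have h1 : (∑ k ∈ Finset.univ \ ({z₁, z₂} : Finset V), wt G γ δ x i.1 k)
        = ∑ k : {v : V // v ∉ ({z₁, z₂} : Finset V)}, (if G.Adj i.1 k.1 then u else 0) := by
      rw [subt]
      refine Finset.sum_congr rfl fun k _ => hwP k.1 k.2
    rw [h1, ← Finset.sum_filter, Finset.sum_const, hreg i, nsmul_eq_mul]
    ring
  have hS : (∑ k, wt G γ δ x i.1 k) ≠ 0 := by rw [hsum]; positivity
  have hN : (∑ k, wt G γ δ x i.1 k * (x k - x i.1)) = 0 := by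
    have h1 : (∑ k ∈ Finset.univ \ ({z₁, z₂} : Finset V),
        wt G γ δ x i.1 k * (x k - x i.1)) = 0 := by
      refine Finset.sum_eq_zero fun k hk => ?_
      rw [Finset.mem_sdiff] at hk
      rw [hx0 k hk.2, hxi]
      ring
    rw [split, h1, hwz1, hwz2, hxz1, hxz2, hxi]
    ring
  rw [jp_eq G _ γ δ x i j hS hN, hsum]
  congr 1
  by_cases hij : i = j
  · subst hij
    have hAd : ¬ G.Adj i.1 i.1 := G.irrefl
    rw [if_pos rfl, if_neg hAd]
    have hterm : ∀ k : V,
        ((x k - x i.1) * (-(2*γ) * (x i.1 - x k) * wt G γ δ x i.1 k *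
          (1 - wt G γ δ x i.1 k)) *
            ((Pi.single (i:V) (1:ℝ) : V → ℝ) i.1 - (Pi.single (i:V) (1:ℝ) : V → ℝ) k)
        + wt G γ δ x i.1 k * ((Pi.single (i:V) (1:ℝ) : V → ℝ) k -
            (Pi.single (i:V) (1:ℝ) : V → ℝ) i.1))
        = 2*γ*(x k)^2 * wt G γ δ x i.1 k * (1 - wt G γ δ x i.1 k) - wt G γ δ x i.1 k := by
      intro k
      by_cases hk : k = i.1
      · subst hk
        have hw0 : wt G γ δ x i.1 i.1 = 0 := by simp [wt]
        rw [hw0, hxi]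
        ring
      · rw [Pi.single_eq_same, Pi.single_eq_of_ne hk, hxi]
        ring
    rw [Finset.sum_congr rfl (fun k _ => hterm k)]
    rw [Finset.sum_sub_distrib, hsum]
    have h2 : (∑ k, 2*γ*(x k)^2 * wt G γ δ x i.1 k * (1 - wt G γ δ x i.1 k))
        = 4*γ*v*(1-v) := by
      rw [split, hwz1, hwz2, hxz1, hxz2]
      have h1 : (∑ k ∈ Finset.univ \ ({z₁, z₂} : Finset V),
          2*γ*(x k)^2 * wt G γ δ x i.1 k * (1 - wt G γ δ x i.1 k)) = 0 := by
        refine Finset.sum_eq_zero fun k hk => ?_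
        rw [Finset.mem_sdiff] at hk
        rw [hx0 k hk.2]
        ring
      rw [h1]; ring
    rw [h2]
    ring
  · have hij1 : i.1 ≠ j.1 := fun h => hij (Subtype.ext h)
    rw [if_neg hij]
    rw [Finset.sum_eq_single (j.1 : V)]
    · rw [Pi.single_eq_same, Pi.single_eq_of_ne hij1, hx0 j.1 j.2, hxi,
        hwP j.1 j.2]
      ring
    · intro k _ hk
      rw [Pi.single_eq_of_ne hk, Pi.single_eq_of_ne hij1]
      ring
    · intro h
      exact absurd (Finset.mem_univ _) h

lemma hasEig_mem_spectrum {n : Type*} [Fintype n] [DecidableEq n] {M : Matrix n n ℝ}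
    {μ : ℝ} (h : HasEig M μ) : μ ∈ spectrum ℝ M := by
  obtain ⟨φ, hφ, heq⟩ := h
  rw [spectrum.mem_iff]
  intro hU
  rw [Matrix.isUnit_iff_isUnit_det, isUnit_iff_ne_zero] at hU
  apply hU
  rw [← Matrix.exists_mulVec_eq_zero_iff]
  refine ⟨φ, hφ, ?_⟩
  rw [Matrix.sub_mulVec, Algebra.algebraMap_eq_smul_one, Matrix.smul_mulVec,
    Matrix.one_mulVec, heq, sub_self]

lemma eig_set_finite {n : Type*} [Fintype n] [DecidableEq n] (M : Matrix n n ℝ) :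
    {μ : ℝ | HasEig M μ}.Finite :=
  (Matrix.finite_spectrum M).subset (fun _ h => hasEig_mem_spectrum h)

lemma lp_psd (G : SimpleGraph V) [DecidableRel G.Adj] (Z : Finset V) (lam : ℝ)
    (h : HasEig (Lp G Z) lam) : 0 ≤ lam := by
  classical
  obtain ⟨φ, hφ, heq⟩ := h
  set a : {v : V // v ∉ Z} → {v : V // v ∉ Z} → ℝ :=
    fun i j => if G.Adj i.1 j.1 then 1 else 0 with ha
  have h1 : ∀ i, (∑ j, Lp G Z i j * φ j) = lam * φ i := by
    intro i
    have := congrFun heq i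
    simpa [Matrix.mulVec, dotProduct] using this
  have hT : 0 < ∑ i, (φ i)^2 := by
    obtain ⟨i0, hi0⟩ := Function.ne_iff.mp hφ
    refine Finset.sum_pos' (fun i _ => sq_nonneg _) ⟨i0, Finset.mem_univ _, ?_⟩
    exact lt_of_le_of_ne (sq_nonneg _) (Ne.symm (pow_ne_zero 2 hi0))
  have hsymm : ∀ i j, a i j = a j i := by
    intro i j
    simp only [ha]
    by_cases h : G.Adj i.1 j.1
    · rw [if_pos h, if_pos (G.adj_symm h)]
    · rw [if_neg h, if_neg (fun hh => h (G.adj_symm hh))]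
  have inner : ∀ i, lam * (φ i)^2
      = (∑ j, a i j * (φ i)^2) - ∑ j, a i j * (φ i * φ j) := by
    intro i
    have hdeg : ((Finset.univ.filter fun k : {v : V // v ∉ Z} => G.Adj i.1 k.1).card : ℝ)
        = ∑ j, a i j := by
      rw [Finset.card_filter]
      push_cast
      refine Finset.sum_congr rfl fun j _ => ?_
      by_cases h : G.Adj i.1 j.1 <;> simp [ha, h]
    have expand : ∀ j, Lp G Z i j * φ j
        = (if i = j then
            (((Finset.univ.filter fun k : {v : V // v ∉ Z} => G.Adj i.1 k.1).card : ℝ) * φ j)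
          else 0) - a i j * φ j := by
      intro j
      simp only [Lp, ha]
      split_ifs <;> ring
    have e1 : (∑ j, Lp G Z i j * φ j)
        = ((Finset.univ.filter fun k : {v : V // v ∉ Z} => G.Adj i.1 k.1).card : ℝ) * φ i
          - ∑ j, a i j * φ j := by
      rw [Finset.sum_congr rfl (fun j _ => expand j), Finset.sum_sub_distrib,
        Finset.sum_ite_eq]
      simp
    have h2 : lam * φ i = (∑ j, a i j) * φ i - ∑ j, a i j * φ j := by
      rw [← h1 i, e1, hdeg]
    calc lam * (φ i)^2 = (lam * φ i) * φ i := by ring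
      _ = ((∑ j, a i j) * φ i - ∑ j, a i j * φ j) * φ i := by rw [h2]
      _ = (∑ j, a i j * (φ i)^2) - ∑ j, a i j * (φ i * φ j) := by
          rw [sub_mul, Finset.sum_mul, Finset.sum_mul, Finset.sum_mul]
          congr 1
          · exact Finset.sum_congr rfl fun j _ => by ring
          · exact Finset.sum_congr rfl fun j _ => by ring
  have key1 : lam * (∑ i, (φ i)^2)
      = (∑ i, ∑ j, a i j * (φ i)^2) - (∑ i, ∑ j, a i j * (φ i * φ j)) := by
    rw [Finset.mul_sum, Finset.sum_congr rfl (fun i _ => inner i), Finset.sum_sub_distrib]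
  have key2 : (∑ i, ∑ j, a i j * (φ i)^2) = ∑ i, ∑ j, a i j * (φ j)^2 := by
    rw [Finset.sum_comm]
    refine Finset.sum_congr rfl fun i _ => Finset.sum_congr rfl fun j _ => ?_
    rw [hsymm]
  have key3 : (0:ℝ) ≤ ∑ i, ∑ j, a i j * (φ i - φ j)^2 := by
    refine Finset.sum_nonneg fun i _ => Finset.sum_nonneg fun j _ => ?_
    have : (0:ℝ) ≤ a i j := by simp only [ha]; split_ifs <;> norm_num
    positivity
  have key4 : (∑ i, ∑ j, a i j * (φ i - φ j)^2)
      = (∑ i, ∑ j, a i j * (φ i)^2) + (∑ i, ∑ j, a i j * (φ j)^2)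
        - 2 * (∑ i, ∑ j, a i j * (φ i * φ j)) := by
    have e2 : ∀ i j : {v : V // v ∉ Z}, a i j * (φ i - φ j)^2
        = a i j * (φ i)^2 + a i j * (φ j)^2 - 2*(a i j * (φ i * φ j)) := by
      intros; ring
    calc (∑ i, ∑ j, a i j * (φ i - φ j)^2)
        = ∑ i, ∑ j, (a i j * (φ i)^2 + a i j * (φ j)^2 - 2*(a i j * (φ i * φ j))) :=
          Finset.sum_congr rfl fun i _ => Finset.sum_congr rfl fun j _ => e2 i j
      _ = _ := by
          simp only [Finset.sum_add_distrib, Finset.sum_sub_distrib, ← Finset.mul_sum]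
  have h5 : 0 ≤ lam * (∑ i, (φ i)^2) := by linarith [key3, key4, key1, key2]
  nlinarith [h5, hT]

lemma jp_eig_transfer (G : SimpleGraph V) [DecidableRel G.Adj] (z₁ z₂ : V) (hzz : z₁ ≠ z₂)
    (hadj : ∀ i : V, i ∉ ({z₁, z₂} : Finset V) → G.Adj i z₁ ∧ G.Adj i z₂)
    (d : ℕ)
    (hreg : ∀ i : {v : V // v ∉ ({z₁, z₂} : Finset V)},
      (Finset.univ.filter fun k : {v : V // v ∉ ({z₁, z₂} : Finset V)} =>
        G.Adj i.1 k.1).card = d)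
    (γ δ μ : ℝ)
    (h : HasEig (Jp G ({z₁, z₂} : Finset V) γ δ (xbarBE z₁ z₂)) μ) :
    ∃ lam : ℝ, HasEig (Lp G ({z₁, z₂} : Finset V)) lam ∧ 0 ≤ lam ∧
      μ = (4*γ*(1/(1 + Real.exp (γ - γ*δ)))*(1 - 1/(1 + Real.exp (γ - γ*δ)))
            - 2*(1/(1 + Real.exp (γ - γ*δ))) - (1/(1 + Real.exp (-(γ*δ))))*lam)
          / (2*(1/(1 + Real.exp (γ - γ*δ))) + d*(1/(1 + Real.exp (-(γ*δ))))) := by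
  classical
  set u : ℝ := 1 / (1 + Real.exp (-(γ*δ))) with hu
  set v : ℝ := 1 / (1 + Real.exp (γ - γ*δ)) with hv
  have hu0 : 0 < u := by rw [hu]; positivity
  have hv0 : 0 < v := by rw [hv]; positivity
  set s : ℝ := 2*v + d*u with hs
  have hs0 : 0 < s := by rw [hs]; positivity
  set C : ℝ := 4*γ*v*(1-v) - s with hC
  obtain ⟨φ, hφ, heq⟩ := h
  set lam : ℝ := (C + u*d - μ*s)/u with hlam
  have hul : u * lam = C + u*(d:ℝ) - μ*s := by
    rw [hlam]; field_simp
  have hJ : ∀ i, (∑ j, Jp G ({z₁, z₂} : Finset V) γ δ (xbarBE z₁ z₂) i j * φ j) = μ * φ i := by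
    intro i
    have := congrFun heq i
    simpa [Matrix.mulVec, dotProduct] using this
  have hmain : ∀ i, u * (∑ j, (if G.Adj i.1 j.1 then (1:ℝ) else 0) * φ j)
      = μ*s*φ i - C*φ i := by
    intro i
    have hthis := hJ i
    have e : ∀ j : {v : V // v ∉ ({z₁, z₂} : Finset V)},
        Jp G ({z₁, z₂} : Finset V) γ δ (xbarBE z₁ z₂) i j * φ j
        = (if i = j then (C/s)*φ j else 0) + (u/s)*((if G.Adj i.1 j.1 then (1:ℝ) else 0)*φ j) := by
      intro j
      rw [jp_entry G z₁ z₂ hzz hadj d hreg γ δ i j]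
      rw [← hu, ← hv, ← hs, ← hC]
      split_ifs <;> ring
    rw [Finset.sum_congr rfl (fun j _ => e j), Finset.sum_add_distrib,
      Finset.sum_ite_eq, if_pos (Finset.mem_univ i), ← Finset.mul_sum] at hthis
    have hsne : s ≠ 0 := hs0.ne'
    field_simp at hthis
    simp only [ite_mul, one_mul, zero_mul] at hthis ⊢
    linear_combination hthis
  have hLp : ∀ i, (∑ j, Lp G ({z₁, z₂} : Finset V) i j * φ j)
      = (d:ℝ)*φ i - (∑ j, (if G.Adj i.1 j.1 then (1:ℝ) else 0) * φ j) := by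
    intro i
    have e : ∀ j : {v : V // v ∉ ({z₁, z₂} : Finset V)},
        Lp G ({z₁, z₂} : Finset V) i j * φ j
        = (if i = j then (d:ℝ)*φ j else 0) - (if G.Adj i.1 j.1 then (1:ℝ) else 0)*φ j := by
      intro j
      simp only [Lp, hreg i]
      split_ifs <;> ring
    rw [Finset.sum_congr rfl (fun j _ => e j), Finset.sum_sub_distrib,
      Finset.sum_ite_eq, if_pos (Finset.mem_univ i)]
  have hLeig : (Lp G ({z₁, z₂} : Finset V)).mulVec φ = lam • φ := by
    funext i
    have h1 : (Lp G ({z₁, z₂} : Finset V)).mulVec φ i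
        = ∑ j, Lp G ({z₁, z₂} : Finset V) i j * φ j := by
      simp [Matrix.mulVec, dotProduct]
    rw [h1, hLp i]
    have h2 : u * ((d:ℝ)*φ i - (∑ j, (if G.Adj i.1 j.1 then (1:ℝ) else 0) * φ j))
        = u * (lam * φ i) := by
      rw [mul_sub, hmain i]
      have : u * (lam * φ i) = (u*lam) * φ i := by ring
      rw [this, hul, hC]
      ring
    have := mul_left_cancel₀ hu0.ne' h2
    rw [this]
    simp
  refine ⟨lam, ⟨φ, hφ, hLeig⟩, lp_psd _ _ _ ⟨φ, hφ, hLeig⟩, ?_⟩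
  have hnum : 4*γ*v*(1-v) - 2*v - u*lam = μ * s := by
    rw [hul, hC, hs]
    ring
  rw [hnum, mul_div_assoc, div_self hs0.ne', mul_one]

end SBCM

/-- With two zealots of opinions `−1, +1`, every persuadable node adjacent
to both, and a `d`-regular persuadable subgraph with Laplacian `L_𝒫` (writing
`u = ω(0)`, `v = ω(1)`, which depend on `γ`): (1) if `δ > 1` the harmonic state is
linearly stable for all sufficiently large `γ`; (2) if `δ = 1`, every eigenvalue `λ`
of `L_𝒫` eventually satisfies `λ ≤ −2v(1 − 2γ(1 − v))/u`; (3) if `δ < 1`, eventually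
the only eigenvalue of `L_𝒫` satisfying that bound is `λ = 0`. -/
theorem stmt_19 {V : Type*} [Fintype V] [DecidableEq V]
    (G : SimpleGraph V) [DecidableRel G.Adj] (z₁ z₂ : V) (hzz : z₁ ≠ z₂)
    (hadj : ∀ i : V, i ∉ ({z₁, z₂} : Finset V) → G.Adj i z₁ ∧ G.Adj i z₂)
    (d : ℕ)
    (hreg : ∀ i : {v : V // v ∉ ({z₁, z₂} : Finset V)},
      (Finset.univ.filter fun k : {v : V // v ∉ ({z₁, z₂} : Finset V)} =>
        G.Adj i.1 k.1).card = d)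
    (δ : ℝ) (hδ : 0 ≤ δ) :
    ((1 < δ) → ∃ Γ : ℝ, ∀ γ : ℝ, Γ < γ →
      SBCM.LinStable (SBCM.Jp G ({z₁, z₂} : Finset V) γ δ (SBCM.xbarBE z₁ z₂))) ∧
    ((δ = 1) → ∀ lam : ℝ,
      SBCM.HasEig (SBCM.Lp G ({z₁, z₂} : Finset V)) lam →
      ∃ Γ : ℝ, ∀ γ : ℝ, Γ < γ →
        lam ≤ -(2 * (1 / (1 + Real.exp (γ * (1 - δ)))) *
            (1 - 2 * γ * (1 - 1 / (1 + Real.exp (γ * (1 - δ)))))) /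
          (1 / (1 + Real.exp (-(γ * δ))))) ∧
    ((δ < 1) → ∃ Γ : ℝ, ∀ γ : ℝ, Γ < γ →
      ∀ lam : ℝ, SBCM.HasEig (SBCM.Lp G ({z₁, z₂} : Finset V)) lam →
        lam ≤ -(2 * (1 / (1 + Real.exp (γ * (1 - δ)))) *
            (1 - 2 * γ * (1 - 1 / (1 + Real.exp (γ * (1 - δ)))))) /
          (1 / (1 + Real.exp (-(γ * δ)))) →
        lam = 0) := by
  refine ⟨?_, ?_, ?_⟩
  · -- Part 1 : δ > 1
    intro hδ1
    have hc : 0 < δ - 1 := by linarith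
    have T0 := Real.tendsto_pow_mul_exp_neg_atTop_nhds_zero 1
    have hcomp : Tendsto (fun γ : ℝ => (δ-1)*γ) atTop atTop :=
      Tendsto.const_mul_atTop hc tendsto_id
    have T1 := T0.comp hcomp
    have T3 : Tendsto (fun γ : ℝ => (2/(δ-1)) * (((δ-1)*γ)^1 * Real.exp (-((δ-1)*γ))))
        atTop (nhds ((2/(δ-1)) * 0)) := T1.const_mul _
    rw [mul_zero] at T3
    have hfun : (fun γ : ℝ => (2/(δ-1)) * (((δ-1)*γ)^1 * Real.exp (-((δ-1)*γ))))
        = fun γ : ℝ => 2*γ*Real.exp (γ - γ*δ) := by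
      funext γ
      rw [pow_one, show -((δ-1)*γ) = γ - γ*δ by ring]
      field_simp
    rw [hfun] at T3
    have hev : ∀ᶠ γ in atTop, 2*γ*Real.exp (γ - γ*δ) < 1 :=
      T3.eventually (eventually_lt_nhds one_pos)
    obtain ⟨Γ₀, hΓ₀⟩ := eventually_atTop.mp hev
    refine ⟨max Γ₀ 0, fun γ hγ => ?_⟩
    intro μ hμ
    obtain ⟨lam, hlamEig, hlam0, hμeq⟩ :=
      SBCM.jp_eig_transfer G z₁ z₂ hzz hadj d hreg γ δ μ hμ
    rw [hμeq]
    set E : ℝ := Real.exp (γ - γ*δ) with hE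
    have hE0 : 0 < E := Real.exp_pos _
    have hu0 : (0:ℝ) < 1/(1 + Real.exp (-(γ*δ))) := by positivity
    have hv0 : (0:ℝ) < 1/(1 + E) := by positivity
    apply div_neg_of_neg_of_pos
    · have hb : 1 - 1/(1+E) ≤ E := by
        have h1 : 1 - 1/(1+E) = E/(1+E) := by
          field_simp
          ring
        rw [h1]
        exact div_le_self hE0.le (by linarith)
      have h2 : 2*γ*E < 1 := hΓ₀ γ (le_of_lt (lt_of_le_of_lt (le_max_left _ _) hγ))
      have hγ0 : (0:ℝ) < γ := lt_of_le_of_lt (le_max_right _ _) hγ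
      have h3 : 2*γ*(1 - 1/(1+E)) < 1 := by
        have := mul_le_mul_of_nonneg_left hb (by positivity : (0:ℝ) ≤ 2*γ)
        calc 2*γ*(1 - 1/(1+E)) ≤ 2*γ*E := this
          _ < 1 := h2
      have hul : 0 ≤ (1/(1 + Real.exp (-(γ*δ)))) * lam := mul_nonneg hu0.le hlam0
      nlinarith [mul_lt_mul_of_pos_left h3 hv0]
    · positivity
  · -- Part 2 : δ = 1
    intro hδ1 lam _
    subst hδ1
    refine ⟨max 1 (lam + 1), fun γ hγ => ?_⟩
    have h1 : (1:ℝ) < γ := lt_of_le_of_lt (le_max_left _ _) hγ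
    have h2 : lam + 1 < γ := lt_of_le_of_lt (le_max_right _ _) hγ
    rw [show γ * (1 - (1:ℝ)) = 0 by ring, Real.exp_zero]
    norm_num
    nlinarith [Real.exp_pos (-γ), h1, h2]
  · -- Part 3 : δ < 1
    intro hδ1
    set L := SBCM.Lp G ({z₁, z₂} : Finset V) with hL
    set S : Set ℝ := {lam | SBCM.HasEig L lam ∧ 0 < lam} with hSdef
    have hfin : S.Finite := (SBCM.eig_set_finite L).subset (fun x hx => hx.1)
    by_cases hne : S.Nonempty
    · obtain ⟨m, hmS, hmin⟩ := Set.exists_min_image S id hfin hne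
      have hm0 : 0 < m := hmS.2
      have hc : 0 < 1 - δ := by linarith
      have T0 := Real.tendsto_pow_mul_exp_neg_atTop_nhds_zero 1
      have hcomp : Tendsto (fun γ : ℝ => (1-δ)*γ) atTop atTop :=
        Tendsto.const_mul_atTop hc tendsto_id
      have T1 := T0.comp hcomp
      have T3 : Tendsto (fun γ : ℝ => (8/(1-δ)) * (((1-δ)*γ)^1 * Real.exp (-((1-δ)*γ))))
          atTop (nhds ((8/(1-δ)) * 0)) := T1.const_mul _
      rw [mul_zero] at T3
      have hfun : (fun γ : ℝ => (8/(1-δ)) * (((1-δ)*γ)^1 * Real.exp (-((1-δ)*γ))))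
          = fun γ : ℝ => 8*γ*Real.exp (-((1-δ)*γ)) := by
        funext γ
        rw [pow_one]
        field_simp
      rw [hfun] at T3
      have hev : ∀ᶠ γ in atTop, 8*γ*Real.exp (-((1-δ)*γ)) < m :=
        T3.eventually (eventually_lt_nhds hm0)
      obtain ⟨Γ₀, hΓ₀⟩ := eventually_atTop.mp hev
      refine ⟨max Γ₀ 1, fun γ hγ lam hEig hle => ?_⟩
      have h0lam : 0 ≤ lam := SBCM.lp_psd _ _ _ hEig
      by_contra hne0
      have hpos : 0 < lam := lt_of_le_of_ne h0lam (Ne.symm hne0)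
      have hm_le : m ≤ lam := hmin lam ⟨hEig, hpos⟩
      have hγ1 : (1:ℝ) ≤ γ := le_of_lt (lt_of_le_of_lt (le_max_right _ _) hγ)
      have hB : 8*γ*Real.exp (-((1-δ)*γ)) < m :=
        hΓ₀ γ (le_of_lt (lt_of_le_of_lt (le_max_left _ _) hγ))
      -- bound the RHS of hle
      set v : ℝ := 1 / (1 + Real.exp (γ * (1 - δ))) with hv
      set e' : ℝ := Real.exp (-(γ * δ)) with he'
      rw [one_div (1 + e'), div_inv_eq_mul] at hle
      have hEv0 : 0 < Real.exp (γ * (1 - δ)) := Real.exp_pos _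
      have hv0 : 0 < v := by rw [hv]; positivity
      have hv1 : v ≤ 1 := by
        rw [hv]
        rw [div_le_one (by positivity)]
        linarith
      have hvE : v ≤ Real.exp (-((1-δ)*γ)) := by
        rw [hv, Real.exp_neg, show (1-δ)*γ = γ*(1-δ) by ring, one_div]
        apply inv_anti₀ hEv0
        linarith
      have he'0 : 0 < e' := Real.exp_pos _
      have he'1 : e' ≤ 1 := by
        rw [he', Real.exp_le_one_iff]
        nlinarith
      have hγ0 : (0:ℝ) < γ := by linarith
      have hRHS : -(2 * v * (1 - 2 * γ * (1 - v))) * (1 + e')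
          ≤ 8*γ*Real.exp (-((1-δ)*γ)) := by
        have hEq : -(2 * v * (1 - 2 * γ * (1 - v))) * (1 + e')
            = (4*γ*v*(1-v) - 2*v)*(1+e') := by ring
        have hA1 : 4*γ*v*(1-v) - 2*v ≤ 4*γ*v := by nlinarith [mul_pos hγ0 (mul_pos hv0 hv0)]
        have hA2 : (4*γ*v*(1-v) - 2*v)*(1+e') ≤ (4*γ*v)*(1+e') :=
          mul_le_mul_of_nonneg_right hA1 (by positivity)
        have hA3 : (4*γ*v)*(1+e') ≤ (4*γ*v)*2 :=
          mul_le_mul_of_nonneg_left (by linarith) (by positivity)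
        have hA4 : (4*γ*v)*2 ≤ 8*γ*Real.exp (-((1-δ)*γ)) := by
          nlinarith [mul_le_mul_of_nonneg_left hvE (by positivity : (0:ℝ) ≤ 8*γ)]
        linarith [hEq.le, hEq.ge]
      linarith
    · refine ⟨0, fun γ _ lam hEig _ => ?_⟩
      have h0 := SBCM.lp_psd _ _ _ hEig
      by_contra h
      exact hne ⟨lam, hEig, lt_of_le_of_ne h0 (Ne.symm h)⟩
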